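/- Let Γ = ℤ[i] be the Gaussian integers viewed as the square lattice in ℂ ≅ ℝ², and let L = ⋃_{k=0}^{m−1}(x_k + Γ) be a point packing with all shift vectors x_k ∈ ℚ(i). Then every similarity rotation of Γ is a similarity rotation of L; in particular SOS(L) = SOS(Γ). -/
import Mathlib

def Gset12 : Set ℂ := {z : ℂ | ∃ a b : ℤ, z = (a : ℂ) + (b : ℂ) * Complex.I}

lemma Gset12_add {z w : ℂ} (hz : z ∈ Gset12) (hw : w ∈ Gset12) : z + w ∈ Gset12 := by
  obtain ⟨a, b, rfl⟩ := hz
  obtain ⟨c, d, rfl⟩ := hw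
  exact ⟨a + c, b + d, by push_cast; ring⟩

lemma Gset12_mul {z w : ℂ} (hz : z ∈ Gset12) (hw : w ∈ Gset12) : z * w ∈ Gset12 := by
  obtain ⟨a, b, rfl⟩ := hz
  obtain ⟨c, d, rfl⟩ := hw
  refine ⟨a * c - b * d, a * d + b * c, ?_⟩
  push_cast
  ring_nf
  rw [Complex.I_sq]
  ring

lemma Gset12_int (a : ℤ) : (a : ℂ) ∈ Gset12 := ⟨a, 0, by push_cast; ring⟩

lemma Gset12_nat_mul (n : ℕ) {z : ℂ} (hz : z ∈ Gset12) : (n : ℂ) * z ∈ Gset12 := by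
  have : ((n : ℤ) : ℂ) ∈ Gset12 := Gset12_int n
  simpa using Gset12_mul this hz

lemma Gset12_rat (p q : ℚ) :
    ∃ n : ℕ, 0 < n ∧ (n : ℂ) * ((p : ℂ) + (q : ℂ) * Complex.I) ∈ Gset12 := by
  refine ⟨p.den * q.den, Nat.mul_pos p.pos q.pos, ⟨p.num * q.den, q.num * p.den, ?_⟩⟩
  have hp : ((p.den : ℚ) * p) = (p.num : ℚ) := by
    rw [mul_comm]; exact_mod_cast Rat.mul_den_eq_num p
  have hq : ((q.den : ℚ) * q) = (q.num : ℚ) := by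
    rw [mul_comm]; exact_mod_cast Rat.mul_den_eq_num q
  have hp' : ((p.den : ℂ) * (p : ℂ)) = (p.num : ℂ) := by exact_mod_cast congrArg (Rat.cast (K := ℂ)) hp
  have hq' : ((q.den : ℂ) * (q : ℂ)) = (q.num : ℂ) := by exact_mod_cast congrArg (Rat.cast (K := ℂ)) hq
  push_cast
  linear_combination (q.den : ℂ) * hp' + ((p.den : ℂ) * Complex.I) * hq'

lemma Gset12_common_den (m : ℕ) (x : Fin m → ℂ)
    (hx : ∀ k : Fin m, ∃ p q : ℚ, x k = (p : ℂ) + (q : ℂ) * Complex.I) :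
    ∃ N : ℕ, 0 < N ∧ ∀ k, (N : ℂ) * x k ∈ Gset12 := by
  have h : ∀ k : Fin m, ∃ n : ℕ, 0 < n ∧ (n : ℂ) * x k ∈ Gset12 := by
    intro k
    obtain ⟨p, q, hpq⟩ := hx k
    obtain ⟨n, hn, hmem⟩ := Gset12_rat p q
    exact ⟨n, hn, by rwa [hpq]⟩
  choose n hn hmem using h
  refine ⟨∏ k, n k, Finset.prod_pos (fun k _ => hn k), fun k => ?_⟩
  have : ((∏ j, n j : ℕ) : ℂ) = (n k : ℂ) * ((∏ j ∈ Finset.univ.erase k, n j : ℕ) : ℂ) := by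
    rw [← Finset.mul_prod_erase Finset.univ n (Finset.mem_univ k)]
    push_cast
    ring
  rw [this, mul_comm ((n k : ℂ)) _, mul_assoc]
  exact Gset12_nat_mul _ (hmem k)

theorem stmt12 (m : ℕ) (hm : 0 < m)
    (G : Set ℂ) (hG : G = {z : ℂ | ∃ a b : ℤ, z = (a : ℂ) + (b : ℂ) * Complex.I})
    (x : Fin m → ℂ)
    (h0 : x ⟨0, hm⟩ = 0)
    (hx : ∀ k : Fin m, ∃ p q : ℚ, x k = (p : ℂ) + (q : ℂ) * Complex.I)
    (hdist : ∀ k1 k2 : Fin m, k1 ≠ k2 → x k1 - x k2 ∉ G)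
    (L : Set ℂ) (hL : L = ⋃ k : Fin m, (fun γ => x k + γ) '' G) :
    (∀ u : ℂ, ‖u‖ = 1 →
        (∃ β > (0 : ℝ), ∀ z ∈ G, β • (u * z) ∈ G) →
        (∃ β > (0 : ℝ), ∀ z ∈ L, β • (u * z) ∈ L)) ∧
    {u : ℂ | ‖u‖ = 1 ∧ ∃ β > (0 : ℝ), ∀ z ∈ L, β • (u * z) ∈ L} =
      {u : ℂ | ‖u‖ = 1 ∧ ∃ β > (0 : ℝ), ∀ z ∈ G, β • (u * z) ∈ G} := by
  have hG' : G = Gset12 := hG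
  obtain ⟨N, hN, hNx⟩ := Gset12_common_den m x hx
  -- G ⊆ L
  have hGL : G ⊆ L := by
    intro z hz
    rw [hL]
    exact Set.mem_iUnion.2 ⟨⟨0, hm⟩, ⟨z, hz, by rw [h0]; simp⟩⟩
  -- forward direction
  have fwd : ∀ u : ℂ, ‖u‖ = 1 →
      (∃ β > (0 : ℝ), ∀ z ∈ G, β • (u * z) ∈ G) →
      (∃ β > (0 : ℝ), ∀ z ∈ L, β • (u * z) ∈ L) := by
    intro u _ ⟨β, hβ, hβG⟩
    refine ⟨N * β, by positivity, fun z hz => ?_⟩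
    rw [hL] at hz
    obtain ⟨k, γ, hγ, rfl⟩ := Set.mem_iUnion.1 hz
    apply hGL
    have key : ((N : ℝ) * β) • (u * (x k + γ)) =
        β • (u * ((N : ℂ) * x k)) + β • (u * ((N : ℂ) * γ)) := by
      simp [Complex.real_smul]
      push_cast
      ring
    rw [key, hG']
    exact Gset12_add (by rw [← hG']; exact hβG _ (by rw [hG']; exact hNx k))
      (by rw [← hG']; exact hβG _ (by rw [hG']; exact Gset12_nat_mul N (by rw [← hG']; exact hγ)))
  refine ⟨fwd, Set.eq_of_subset_of_subset ?_ ?_⟩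
  · rintro u ⟨hu, β, hβ, hβL⟩
    refine ⟨hu, N * β, by positivity, fun z hz => ?_⟩
    have : β • (u * z) ∈ L := hβL z (hGL hz)
    rw [hL] at this
    obtain ⟨k, γ, hγ, heq⟩ := Set.mem_iUnion.1 this
    have key : ((N : ℝ) * β) • (u * z) = (N : ℂ) * (β • (u * z)) := by
      simp [Complex.real_smul]; push_cast; ring
    rw [key, ← heq]
    simp only [mul_add]
    rw [hG']
    exact Gset12_add (hNx k) (Gset12_nat_mul N (by rw [← hG']; exact hγ))
  · rintro u ⟨hu, hex⟩
    exact ⟨hu, fwd u hu hex⟩
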